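/- Replacing the explicit-Euler predictor in the explicit trapezoidal (Heun) Runge–Kutta method by the explicit midpoint predictor yields a method whose increment matches the implicit trapezoidal rule to third order: for y' = g(y) with g smooth, if y^(1) = y^n + Δt·g(y^n + (Δt/2)g(y^n)) and y^{n+1}_{exp} = y^n + (Δt/2)[g(y^n) + g(y^(1))], while y^{n+1}_{imp} solves y = y^n + (Δt/2)[g(y^n) + g(y)], then y^{n+1}_{exp} - y^{n+1}_{imp} = O(Δt⁴). -/

import Mathlib

open Filter Asymptotics Topology

set_option maxHeartbeats 1600000 in
/-- Replacing the explicit-Euler predictor in Heun's method by the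
explicit midpoint predictor yields a method matching the implicit trapezoidal rule
to third order: for `y' = g(y)` with `g` C³, if
`y⁽¹⁾ = yⁿ + Δt·g(yⁿ + (Δt/2)g(yⁿ))` and
`y^{n+1}_exp = yⁿ + (Δt/2)[g(yⁿ) + g(y⁽¹⁾)]`, while `y^{n+1}_imp` solves
`y = yⁿ + (Δt/2)[g(yⁿ) + g(y)]` (and stays `O(Δt)`-close to `yⁿ`), then
`y^{n+1}_exp - y^{n+1}_imp = O(Δt⁴)` as `Δt → 0⁺`. -/
theorem midpoint_predictor_trapezoidal_corrector_fourth_order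
    (g : ℝ → ℝ) (hg : ContDiff ℝ 3 g) (yn : ℝ)
    (yimp : ℝ → ℝ) (K δ0 : ℝ) (hδ0 : 0 < δ0)
    (hfix : ∀ Δt : ℝ, 0 < Δt → Δt < δ0 →
      yimp Δt = yn + (Δt/2) * (g yn + g (yimp Δt)))
    (hclose : ∀ Δt : ℝ, 0 < Δt → Δt < δ0 → |yimp Δt - yn| ≤ K * Δt) :
    (fun Δt : ℝ =>
        (yn + (Δt/2) * (g yn + g (yn + Δt * g (yn + (Δt/2) * g yn))))
          - yimp Δt)
      =O[𝓝[>] (0:ℝ)] (fun Δt => Δt^4) := by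
  -- smoothness facts
  have hg1 : Differentiable ℝ g := hg.differentiable (by norm_num)
  have hg' : ContDiff ℝ 2 (deriv g) :=
    (contDiff_succ_iff_deriv.mp (show ContDiff ℝ (2+1) g by exact_mod_cast hg)).2.2
  have hg'1 : Differentiable ℝ (deriv g) := hg'.differentiable (by norm_num)
  have hg'' : Continuous (deriv (deriv g)) :=
    ((contDiff_succ_iff_deriv.mp
      (show ContDiff ℝ (1+1) (deriv g) by exact_mod_cast hg')).2.2).continuous
  -- K is nonnegative
  have hK : 0 ≤ K := by
    have h := hclose (δ0/2) (by linarith) (by linarith)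
    have h0 : (0:ℝ) ≤ |yimp (δ0/2) - yn| := abs_nonneg _
    nlinarith
  -- the compact neighbourhood and bounds for g, g', g''
  obtain ⟨G0, hG0def⟩ : ∃ G0 : ℝ, G0 = |g yn| := ⟨_, rfl⟩
  have hG0n : 0 ≤ G0 := hG0def ▸ abs_nonneg _
  set M : ℝ := K + G0 + 1 with hMdef
  have hMpos : 0 < M := by positivity
  set J : Set ℝ := Set.Icc (yn - M) (yn + M) with hJdef
  have hJc : IsCompact J := isCompact_Icc
  have hJconv : Convex ℝ J := convex_Icc _ _
  obtain ⟨G1, hG1⟩ := hJc.exists_bound_of_continuousOn hg1.continuous.continuousOn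
  obtain ⟨L0a, hL0a⟩ := hJc.exists_bound_of_continuousOn hg'1.continuous.continuousOn
  obtain ⟨L1a, hL1a⟩ := hJc.exists_bound_of_continuousOn hg''.continuousOn
  set G : ℝ := max G1 0 with hGdef
  set L0 : ℝ := max L0a 0 with hL0def
  set L1 : ℝ := max L1a 0 with hL1def
  have hGn : 0 ≤ G := le_max_right _ _
  have hL0n : 0 ≤ L0 := le_max_right _ _
  have hL1n : 0 ≤ L1 := le_max_right _ _
  have hGb : ∀ x ∈ J, |g x| ≤ G := fun x hx =>
    le_trans (by simpa [Real.norm_eq_abs] using hG1 x hx) (le_max_left _ _)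
  have hmem : ∀ x : ℝ, |x - yn| ≤ M → x ∈ J := by
    intro x hx
    rw [hJdef, Set.mem_Icc]
    rcases abs_le.mp hx with ⟨h1, h2⟩
    constructor <;> linarith
  -- Lipschitz estimates on J
  have hL0b : ∀ t ∈ J, ‖deriv g t‖ ≤ L0 := fun t ht => le_trans (hL0a t ht) (le_max_left _ _)
  have hL1b : ∀ t ∈ J, ‖deriv (deriv g) t‖ ≤ L1 := fun t ht =>
    le_trans (hL1a t ht) (le_max_left _ _)
  have lipg : ∀ x ∈ J, ∀ y ∈ J, |g y - g x| ≤ L0 * |y - x| := by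
    intro x hx y hy
    simpa [Real.norm_eq_abs] using
      hJconv.norm_image_sub_le_of_norm_deriv_le (fun t _ => hg1 t) hL0b hx hy
  have lipg' : ∀ x ∈ J, ∀ y ∈ J, |deriv g y - deriv g x| ≤ L1 * |y - x| := by
    intro x hx y hy
    simpa [Real.norm_eq_abs] using
      hJconv.norm_image_sub_le_of_norm_deriv_le (fun t _ => hg'1 t) hL1b hx hy
  -- the cutoff for Δt
  set δ : ℝ := min (min 1 δ0) (M / (G + 1)) with hδdef
  have hδpos : 0 < δ := by
    apply lt_min (lt_min one_pos hδ0)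
    positivity
  rw [isBigO_iff]
  refine ⟨L0 * (L1 * G0^2 + L0^2 * K) / 8, ?_⟩
  filter_upwards [Ioo_mem_nhdsGT_of_mem (Set.mem_Ico.mpr ⟨le_refl (0:ℝ), hδpos⟩)]
    with Δt hΔt
  obtain ⟨ht0, htδ⟩ := hΔt
  have ht1 : Δt ≤ 1 := le_trans htδ.le (le_trans (min_le_left _ _) (min_le_left _ _))
  have htδ0 : Δt < δ0 := lt_of_lt_of_le htδ (le_trans (min_le_left _ _) (min_le_right _ _))
  have htM : Δt * (G + 1) ≤ M := by
    calc Δt * (G + 1) ≤ (M / (G + 1)) * (G + 1) := by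
          apply mul_le_mul_of_nonneg_right (le_trans htδ.le (min_le_right _ _)) (by positivity)
      _ = M := by field_simp
  -- the points
  set p : ℝ := yn + (Δt/2) * g yn with hpdef
  set q : ℝ := yn + Δt * g yn with hqdef
  set z : ℝ := yimp Δt with hzdef
  set y1 : ℝ := yn + Δt * g p with hy1def
  have hzfix : z = yn + (Δt/2) * (g yn + g z) := hfix Δt ht0 htδ0
  have hzcl : |z - yn| ≤ K * Δt := hclose Δt ht0 htδ0
  -- memberships
  have hynJ : yn ∈ J := hmem yn (by simpa using hMpos.le)
  have hpJ : p ∈ J := by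
    apply hmem
    have : |p - yn| = Δt/2 * G0 := by
      rw [hpdef, hG0def]; rw [show yn + Δt/2 * g yn - yn = Δt/2 * g yn by ring, abs_mul,
        abs_of_pos (by linarith : (0:ℝ) < Δt/2)]
    rw [this]; rw [hG0def] at hG0n ⊢; nlinarith
  have hqJ : q ∈ J := by
    apply hmem
    have : |q - yn| = Δt * G0 := by
      rw [hqdef, hG0def]; rw [show yn + Δt * g yn - yn = Δt * g yn by ring, abs_mul,
        abs_of_pos ht0]
    rw [this]; rw [hG0def] at hG0n ⊢; nlinarith
  have hzJ : z ∈ J := hmem z (by nlinarith)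
  have hy1J : y1 ∈ J := by
    apply hmem
    have : |y1 - yn| = Δt * |g p| := by
      rw [hy1def, show yn + Δt * g p - yn = Δt * g p by ring, abs_mul, abs_of_pos ht0]
    rw [this]
    have := hGb p hpJ
    nlinarith
  -- midpoint second-difference bound: |2 g p - g yn - g q| ≤ L1 * (Δt*G0)^2 / 2
  set c : ℝ := deriv g p with hcdef
  set h : ℝ → ℝ := fun t => g t - c * t with hhdef
  have hh : ∀ t : ℝ, HasDerivAt h (deriv g t - c) t := by
    intro t
    have h1 : HasDerivAt (fun x : ℝ => c * x) (c * 1) t := (hasDerivAt_id t).const_mul c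
    have h2 := (hg1 t).hasDerivAt.sub h1
    rw [mul_one] at h2
    exact h2
  set m : ℝ := min yn q with hmdef
  set mx : ℝ := max yn q with hmxdef
  set s : Set ℝ := Set.Icc m mx with hsdef
  have hsJ : s ⊆ J := by
    rw [hsdef, hJdef]
    apply Set.Icc_subset_Icc
    · exact le_min (Set.mem_Icc.mp hynJ).1 (Set.mem_Icc.mp hqJ).1
    · exact max_le (Set.mem_Icc.mp hynJ).2 (Set.mem_Icc.mp hqJ).2
  have hmmx : m + mx = yn + q := min_add_max yn q
  have hmxm : mx - m = |q - yn| := by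
    rw [hmxdef, hmdef, max_comm, min_comm, max_sub_min_eq_abs, abs_sub_comm]
  have hpmid : p = (m + mx) / 2 := by rw [hmmx, hpdef, hqdef]; ring
  have hA : |q - yn| = Δt * G0 := by
    rw [hqdef, hG0def, show yn + Δt * g yn - yn = Δt * g yn by ring, abs_mul, abs_of_pos ht0]
  have hbound : ∀ t ∈ s, ‖deriv g t - c‖ ≤ L1 * (Δt * G0 / 2) := by
    intro t hts
    rcases Set.mem_Icc.mp hts with ⟨h1, h2⟩
    have htp : |t - p| ≤ Δt * G0 / 2 := by
      rw [abs_le]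
      constructor <;> [linarith [hpmid, hmxm, hA]; linarith [hpmid, hmxm, hA]]
    calc ‖deriv g t - c‖ = |deriv g t - deriv g p| := by rw [Real.norm_eq_abs, hcdef]
      _ ≤ L1 * |t - p| := lipg' p hpJ t (hsJ hts)
      _ ≤ L1 * (Δt * G0 / 2) := by
          apply mul_le_mul_of_nonneg_left htp hL1n
  have hconvs : Convex ℝ s := convex_Icc _ _
  have hyns : yn ∈ s := Set.mem_Icc.mpr ⟨min_le_left _ _, le_max_left _ _⟩
  have hqs : q ∈ s := Set.mem_Icc.mpr ⟨min_le_right _ _, le_max_right _ _⟩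
  have hps : p ∈ s := by
    rw [hsdef, Set.mem_Icc, hpmid]
    constructor
    · have := min_le_max (a := yn) (b := q); rw [← hmdef, ← hmxdef] at this; linarith
    · have := min_le_max (a := yn) (b := q); rw [← hmdef, ← hmxdef] at this; linarith
  have hstep1 : |h p - h yn| ≤ L1 * (Δt * G0 / 2) * |p - yn| := by
    have := hconvs.norm_image_sub_le_of_norm_hasDerivWithin_le
      (fun t ht => (hh t).hasDerivWithinAt) hbound hyns hps
    simpa [Real.norm_eq_abs] using this
  have hstep2 : |h q - h p| ≤ L1 * (Δt * G0 / 2) * |q - p| := by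
    have := hconvs.norm_image_sub_le_of_norm_hasDerivWithin_le
      (fun t ht => (hh t).hasDerivWithinAt) hbound hps hqs
    simpa [Real.norm_eq_abs] using this
  have hpyn : |p - yn| = Δt * G0 / 2 := by
    rw [hpdef, hG0def, show yn + Δt/2 * g yn - yn = Δt/2 * g yn by ring, abs_mul,
      abs_of_pos (by linarith : (0:ℝ) < Δt/2)]
    ring
  have hqp : |q - p| = Δt * G0 / 2 := by
    rw [hqdef, hpdef, hG0def, show yn + Δt * g yn - (yn + Δt/2 * g yn) = Δt/2 * g yn by ring,
      abs_mul, abs_of_pos (by linarith : (0:ℝ) < Δt/2)]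
    ring
  have h2p : p + p - yn - q = 0 := by rw [hpdef, hqdef]; ring
  have hBrep : 2 * g p - g yn - g q = (h p - h yn) - (h q - h p) := by
    simp only [hhdef]
    linear_combination c * h2p
  have hB : |2 * g p - g yn - g q| ≤ L1 * (Δt * G0)^2 / 2 := by
    rw [hBrep]
    calc |(h p - h yn) - (h q - h p)| ≤ |h p - h yn| + |h q - h p| := abs_sub _ _
      _ ≤ L1 * (Δt * G0 / 2) * |p - yn| + L1 * (Δt * G0 / 2) * |q - p| := by
          exact add_le_add hstep1 hstep2
      _ = L1 * (Δt * G0)^2 / 2 := by rw [hpyn, hqp]; ring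
  -- |g q - g z| bound
  have hqz : |q - z| = (Δt/2) * |g yn - g z| := by
    have : q - z = (Δt/2) * (g yn - g z) := by
      linear_combination hqdef - hzfix
    rw [this, abs_mul, abs_of_pos (by linarith : (0:ℝ) < Δt/2)]
  have hgynz : |g yn - g z| ≤ L0 * (K * Δt) := by
    have h1 : |g yn - g z| = |g z - g yn| := abs_sub_comm _ _
    rw [h1]
    calc |g z - g yn| ≤ L0 * |z - yn| := lipg yn hynJ z hzJ
      _ ≤ L0 * (K * Δt) := mul_le_mul_of_nonneg_left hzcl hL0n
  have hS : |g q - g z| ≤ L0 * ((Δt/2) * (L0 * (K * Δt))) := by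
    calc |g q - g z| = |g z - g q| := abs_sub_comm _ _
      _ ≤ L0 * |z - q| := lipg q hqJ z hzJ
      _ = L0 * |q - z| := by rw [abs_sub_comm]
      _ ≤ L0 * ((Δt/2) * (L0 * (K * Δt))) := by
          rw [hqz]
          apply mul_le_mul_of_nonneg_left _ hL0n
          apply mul_le_mul_of_nonneg_left hgynz (by linarith)
  -- |y1 - z| bound
  have hy1z_eq : y1 - z = (Δt/2) * ((2 * g p - g yn - g q) + (g q - g z)) := by
    linear_combination hy1def - hzfix
  have hy1z : |y1 - z| ≤ (Δt/2) * (L1 * (Δt * G0)^2 / 2 + L0 * ((Δt/2) * (L0 * (K * Δt)))) := by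
    rw [hy1z_eq, abs_mul, abs_of_pos (by linarith : (0:ℝ) < Δt/2)]
    apply mul_le_mul_of_nonneg_left _ (by linarith)
    calc |(2 * g p - g yn - g q) + (g q - g z)| ≤ |2 * g p - g yn - g q| + |g q - g z| :=
          abs_add_le _ _
      _ ≤ _ := add_le_add hB hS
  -- final bound
  have hfin_eq : (yn + (Δt/2) * (g yn + g y1)) - z = (Δt/2) * (g y1 - g z) := by
    linear_combination -hzfix
  have hfin : |(yn + (Δt/2) * (g yn + g y1)) - z| ≤
      L0 * (L1 * G0^2 + L0^2 * K) / 8 * Δt^4 := by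
    rw [hfin_eq, abs_mul, abs_of_pos (by linarith : (0:ℝ) < Δt/2)]
    calc (Δt/2) * |g y1 - g z| ≤ (Δt/2) * (L0 * |y1 - z|) := by
          apply mul_le_mul_of_nonneg_left _ (by linarith)
          calc |g y1 - g z| = |g z - g y1| := abs_sub_comm _ _
            _ ≤ L0 * |z - y1| := lipg y1 hy1J z hzJ
            _ = L0 * |y1 - z| := by rw [abs_sub_comm]
      _ ≤ (Δt/2) * (L0 * ((Δt/2) * (L1 * (Δt * G0)^2 / 2 + L0 * ((Δt/2) * (L0 * (K * Δt)))))) := by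
          apply mul_le_mul_of_nonneg_left _ (by linarith)
          exact mul_le_mul_of_nonneg_left hy1z hL0n
      _ = L0 * (L1 * G0^2 + L0^2 * K) / 8 * Δt^4 := by ring
  -- conclude
  rw [Real.norm_eq_abs, Real.norm_eq_abs, abs_of_pos (by positivity : (0:ℝ) < Δt^4)]
  simpa [hy1def, hpdef, hzdef] using hfin
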